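/- Let π_1, …, π_n (n ≥ 1) be policies, let W(s) = max_{1 ≤ i ≤ n} V^{π_i}(s), and let Π_ps be the switching policy defined by Π_ps(s) = π_{i*(s)}(s) where i*(s) is an index attaining max_{1 ≤ i ≤ n} V^{π_i}(s). Then W(s) ≤ (T_{Π_ps} W)(s) for every state s; that is, the pointwise maximum of the value functions is a subsolution of the Bellman operator of the switching policy. -/

import Mathlib

/-- The Bellman operator for policy `π`:
`(T_π f)(s) = R(s) + β · Σ_{s'} P(s, π(s))(s') · f(s')`. -/
noncomputable def bellman {S A : Type*} (P : S → A → PMF S) (R : S → ℝ) (β : ℝ)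
    (π : S → A) (f : S → ℝ) : S → ℝ :=
  fun s => R s + β * ∑' s', ((P s (π s)) s').toReal * f s'

lemma pmf_mul_summable {S : Type*} (p : PMF S) (f : S → ℝ) (C : ℝ)
    (hC : ∀ s, |f s| ≤ C) : Summable (fun s => (p s).toReal * f s) := by
  have hp : Summable (fun s => (p s).toReal) :=
    ENNReal.summable_toReal (by simp [p.tsum_coe])
  refine Summable.of_abs ?_
  refine Summable.of_nonneg_of_le (fun s => abs_nonneg _) (fun s => ?_) (hp.mul_right C)
  rw [abs_mul, abs_of_nonneg ENNReal.toReal_nonneg]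
  exact mul_le_mul_of_nonneg_left (hC s) ENNReal.toReal_nonneg

/-- Let `π_1, …, π_n` (`n ≥ 1`) be policies with value functions `V^{π_i}` (the
bounded fixed points of the respective Bellman operators), let
`W(s) = max_i V^{π_i}(s)`, and let `Π_ps(s) = π_{i*(s)}(s)` where `i*(s)` attains
the maximum `max_i V^{π_i}(s)`. Then `W(s) ≤ (T_{Π_ps} W)(s)` for every state `s`:
the pointwise maximum of the value functions is a subsolution of the Bellman
operator of the switching policy. -/
theorem max_value_subsolution_of_switching_bellman
    {S A : Type*} [Nonempty S] [Nonempty A]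
    (P : S → A → PMF S) (R : S → ℝ)
    (β : ℝ) (hβ0 : 0 ≤ β) (hβ1 : β < 1)
    (n : ℕ) (hn : 1 ≤ n) (π : Fin n → S → A)
    (V : Fin n → S → ℝ)
    (hVbdd : ∀ i, ∃ C : ℝ, ∀ s, |V i s| ≤ C)
    (hVfix : ∀ i s, V i s = bellman P R β (π i) (V i) s)
    (istar : S → Fin n)
    (histar : ∀ s i, V i s ≤ V (istar s) s)
    (W : S → ℝ) (hW : ∀ s, W s = V (istar s) s)
    (pps : S → A) (hPps : ∀ s, pps s = π (istar s) s) :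
    ∀ s, W s ≤ bellman P R β pps W s := by
  intro s
  obtain ⟨C, hC⟩ := hVbdd (istar s)
  have hWC : ∃ D : ℝ, ∀ s', |W s'| ≤ D := by
    choose Cs hCs using hVbdd
    refine ⟨∑ i, Cs i, fun s' => ?_⟩
    rw [hW]
    calc |V (istar s') s'| ≤ Cs (istar s') := hCs _ _
      _ ≤ ∑ i, Cs i := Finset.single_le_sum
          (fun i _ => le_trans (abs_nonneg _) (hCs i s')) (Finset.mem_univ _)
  obtain ⟨D, hD⟩ := hWC
  rw [hW s, hVfix (istar s) s]
  unfold bellman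
  rw [hPps s]
  gcongr _ + β * ?_
  refine Summable.tsum_le_tsum (fun s' => ?_)
    (pmf_mul_summable _ _ C hC) (pmf_mul_summable _ _ D hD)
  have : V (istar s) s' ≤ W s' := by rw [hW s']; exact histar s' _
  exact mul_le_mul_of_nonneg_left this ENNReal.toReal_nonneg
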